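/- (Lemma 1, first inclusion.) Suppose Assumption A1 holds for g, and suppose the base set D satisfies Z*_{t',s} ⊆ D for every t' ≥ s. Then, for every choice of the families Future_{t,s} and Past_s and every t ≥ s, the exact living set is contained in the recursively maintained set: Z*_{t,s} ⊆ Z_{t,s}. -/
import Mathlib


/-- The functional cost of candidate change `s` at time `t`, evaluated at mean `μ`:
`f̃_{t,s}(μ) = F(s) + Σ_{i=s+1}^{t} (y i − μ)² + α − β·g(t−s)`. -/
noncomputable def ftilde (y F : ℕ → ℝ) (α β : ℝ) (g : ℕ → ℝ) (t s : ℕ) (μ : ℝ) : ℝ :=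
  F s + ∑ i ∈ Finset.Icc (s + 1) t, (y i - μ) ^ 2 + α - β * g (t - s)

/-- `I_{t,s,s'}`: the set of means on which change `s` beats change `s'` at time `t`. -/
def Iset (y F : ℕ → ℝ) (α β : ℝ) (g : ℕ → ℝ) (t s s' : ℕ) : Set ℝ :=
  {μ : ℝ | ftilde y F α β g t s μ ≤ ftilde y F α β g t s' μ}

/-- `I_{∞,s,s'}`: the limiting comparison set as `t → ∞`. -/
def Iinf (y F : ℕ → ℝ) (s s' : ℕ) : Set ℝ :=
  {μ : ℝ | F s - F s' + ∑ i ∈ Finset.Icc (s + 1) s', (y i - μ) ^ 2 ≤ 0}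

/-- `Z*_{t,s}`: the exact living set of change `s` at time `t` (ties between equal
costs are assigned to the older change). -/
noncomputable def Zstar (y F : ℕ → ℝ) (α β : ℝ) (g : ℕ → ℝ) (t s : ℕ) : Set ℝ :=
  {μ : ℝ | (∀ s'' : ℕ, s'' < s → ftilde y F α β g t s μ < ftilde y F α β g t s'' μ) ∧
           (∀ s' : ℕ, s < s' → s' ≤ t → ftilde y F α β g t s μ ≤ ftilde y F α β g t s' μ)}

/-- Lemma 1, first inclusion: under Assumption A1, if the base set `D`
contains every exact living set `Z*_{t',s}` for `t' ≥ s`, then for any choice of the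
families `Future_{t,s}` and `Past_s`, the recursively maintained set `Z_{t,s}` given by
`Z_{s,s} = D` and
`Z_{t+1,s} = (Z_{t,s} ∩ ⋂_{s' ∈ Future_{t,s}} I_{t+1,s,s'}) \ ⋃_{s'' ∈ Past_s} I_{∞,s'',s}`
contains the exact living set: `Z*_{t,s} ⊆ Z_{t,s}` for all `t ≥ s`. -/

lemma ftilde_sub (y F : ℕ → ℝ) (α β : ℝ) (g : ℕ → ℝ) (t s s' : ℕ)
    (h1 : s ≤ s') (h2 : s' ≤ t) (μ : ℝ) :
    ftilde y F α β g t s μ - ftilde y F α β g t s' μ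
      = (F s - F s' + ∑ i ∈ Finset.Icc (s + 1) s', (y i - μ) ^ 2)
        + β * (g (t - s') - g (t - s)) := by
  unfold ftilde
  have hsplit : (∑ i ∈ Finset.Icc (s + 1) s', (y i - μ) ^ 2)
      + ∑ i ∈ Finset.Icc (s' + 1) t, (y i - μ) ^ 2
      = ∑ i ∈ Finset.Icc (s + 1) t, (y i - μ) ^ 2 := by
    rw [Finset.Icc_add_one_left_eq_Ioc, Finset.Icc_add_one_left_eq_Ioc, Finset.Icc_add_one_left_eq_Ioc]
    exact Finset.sum_Ioc_consecutive _ h1 h2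
  linarith [hsplit]

lemma gdiff_nonpos (g : ℕ → ℝ) {s'' s : ℕ}
    (hmono : ∀ t₁ t₂ : ℕ, s < t₁ → t₁ ≤ t₂ →
      g (t₁ - s) - g (t₁ - s'') ≤ g (t₂ - s) - g (t₂ - s''))
    (hlim : Filter.Tendsto (fun t : ℕ => g (t - s) - g (t - s'')) Filter.atTop (nhds 0))
    {t : ℕ} (ht : s < t) : g (t - s) - g (t - s'') ≤ 0 := by
  refine ge_of_tendsto hlim ?_
  filter_upwards [Filter.eventually_ge_atTop t] with t₂ h
  exact hmono t t₂ ht h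

theorem Zstar_subset_Z (y F : ℕ → ℝ) (α β : ℝ) (hβ : 0 ≤ β) (g : ℕ → ℝ)
    (hA1 : ∀ s s' : ℕ, s < s' →
      (∀ t₁ t₂ : ℕ, s' < t₁ → t₁ ≤ t₂ →
        g (t₁ - s') - g (t₁ - s) ≤ g (t₂ - s') - g (t₂ - s)) ∧
      Filter.Tendsto (fun t : ℕ => g (t - s') - g (t - s)) Filter.atTop (nhds 0))
    (s : ℕ) (D : Set ℝ) (hD : ∀ t' : ℕ, s ≤ t' → Zstar y F α β g t' s ⊆ D)
    (Future : ℕ → Set ℕ) (hFuture : ∀ t : ℕ, s ≤ t → Future t ⊆ Set.Icc (s + 1) t)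
    (Past : Set ℕ) (hPast : Past ⊆ Set.Iio s)
    (Z : ℕ → Set ℝ) (hZs : Z s = D)
    (hZrec : ∀ t : ℕ, s ≤ t →
      Z (t + 1) =
        (Z t ∩ ⋂ s' ∈ Future t, Iset y F α β g (t + 1) s s') \
          ⋃ s'' ∈ Past, Iinf y F s'' s) :
    ∀ t : ℕ, s ≤ t → Zstar y F α β g t s ⊆ Z t := by
  have key : ∀ t : ℕ, s ≤ t → ∀ t' : ℕ, t ≤ t' → Zstar y F α β g t' s ⊆ Z t := by
    intro t hst
    induction t, hst using Nat.le_induction with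
    | base => intro t' ht'; rw [hZs]; exact hD t' ht'
    | succ t hst ih =>
      intro t' ht' μ hμ
      obtain ⟨hpast, hfut⟩ := hμ
      rw [hZrec t hst]
      refine ⟨⟨ih t' (le_trans (Nat.le_succ t) ht') ⟨hpast, hfut⟩, ?_⟩, ?_⟩
      · simp only [Set.mem_iInter]
        intro s' hs'
        obtain ⟨hs1, hs2⟩ := hFuture t hst hs'
        have hlt : s < s' := hs1
        have h1 := hfut s' hlt (le_trans hs2 (le_trans (Nat.le_succ t) ht'))
        have e1 := ftilde_sub y F α β g t' s s' hlt.le (by omega) μ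
        have e2 := ftilde_sub y F α β g (t + 1) s s' hlt.le (by omega) μ
        have hg := (hA1 s s' hlt).1 (t + 1) t' (by omega) ht'
        have hprod : β * (g (t + 1 - s') - g (t + 1 - s))
            ≤ β * (g (t' - s') - g (t' - s)) := mul_le_mul_of_nonneg_left hg hβ
        simp only [Iset, Set.mem_setOf_eq]
        linarith
      · simp only [Set.mem_iUnion, not_exists]
        intro s'' hs''
        have hlt : s'' < s := hPast hs''
        have h1 := hpast s'' hlt
        have e1 := ftilde_sub y F α β g t' s'' s hlt.le (by omega) μ
        have hg := gdiff_nonpos g (hA1 s'' s hlt).1 (hA1 s'' s hlt).2 (show s < t' by omega)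
        have hprod : β * (g (t' - s) - g (t' - s'')) ≤ 0 :=
          mul_nonpos_iff.mpr (Or.inl ⟨hβ, hg⟩)
        simp only [Iinf, Set.mem_setOf_eq, not_le]
        linarith
  intro t hst
  exact key t hst t le_rfl
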